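/- Let ε > 0, c > 0, Q : ℝ → (0,∞), and let (t_n)_{n∈ℤ} be strictly increasing with t_n → ±∞ as n → ±∞. Assume that e^{−c} ≤ Q(t)/Q(t_n) ≤ e^{c} whenever t ∈ [t_n, t_{n+1}]. Define p(n) := ε · inf { e^{ε(t_m − t_n)} Q(t_m) : m ≥ n } and q(t) := ε · inf { e^{ε(s − t)} Q(s) : s ≥ t }. Then for every n ∈ ℤ: q(t_n) ≤ p(n) ≤ e^{c} · q(t_n). -/

import Mathlib

open Filter

/-- Comparison between the ℤ-indexed parameter `p(n)` and its continuous version `q(t)`: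
`q(t_n) ≤ p(n) ≤ e^c q(t_n)`. -/
theorem discrete_vs_continuous_parameter (ε c : ℝ) (hε : 0 < ε) (hc : 0 < c)
    (Q : ℝ → ℝ) (hQ : ∀ t, 0 < Q t)
    (t : ℤ → ℝ) (ht : StrictMono t)
    (htop : Tendsto t atTop atTop) (hbot : Tendsto t atBot atBot)
    (hratio : ∀ n : ℤ, ∀ s ∈ Set.Icc (t n) (t (n + 1)),
      Real.exp (-c) ≤ Q s / Q (t n) ∧ Q s / Q (t n) ≤ Real.exp c)
    (p : ℤ → ℝ)
    (hp : ∀ n : ℤ, p n = ε * sInf {y : ℝ | ∃ m : ℤ, n ≤ m ∧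
      y = Real.exp (ε * (t m - t n)) * Q (t m)})
    (q : ℝ → ℝ)
    (hq : ∀ s : ℝ, q s = ε * sInf {y : ℝ | ∃ s' : ℝ, s ≤ s' ∧
      y = Real.exp (ε * (s' - s)) * Q s'}) :
    ∀ n : ℤ, q (t n) ≤ p n ∧ p n ≤ Real.exp c * q (t n) := by
  intro n
  classical
  set A := {y : ℝ | ∃ m : ℤ, n ≤ m ∧ y = Real.exp (ε * (t m - t n)) * Q (t m)} with hA
  set B := {y : ℝ | ∃ s' : ℝ, t n ≤ s' ∧ y = Real.exp (ε * (s' - t n)) * Q s'} with hB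
  have hAB : A ⊆ B := by
    rintro y ⟨m, hm, rfl⟩
    exact ⟨t m, ht.monotone hm, rfl⟩
  have hAne : A.Nonempty := ⟨_, n, le_refl n, rfl⟩
  have hBne : B.Nonempty := ⟨_, t n, le_refl _, rfl⟩
  have hBb : BddBelow B := by
    refine ⟨0, ?_⟩
    rintro y ⟨s', _, rfl⟩
    have := (hQ s')
    positivity
  have hAb : BddBelow A := hBb.mono hAB
  -- key inequality for the second part
  have key : ∀ y ∈ B, sInf A ≤ Real.exp c * y := by
    rintro y ⟨s', hs', rfl⟩
    -- find greatest m with t m ≤ s'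
    obtain ⟨N, hN⟩ := (htop.eventually_ge_atTop (s' + 1)).exists_forall_of_atTop
    have hbd : ∀ z : ℤ, t z ≤ s' → z ≤ N := by
      intro z hz
      by_contra hzN
      push_neg at hzN
      have := hN z hzN.le
      linarith
    obtain ⟨m, hm, hmax⟩ := Int.exists_greatest_of_bdd ⟨N, hbd⟩ ⟨n, hs'⟩
    have hnm : n ≤ m := hmax n hs'
    have hlt : s' < t (m + 1) := by
      by_contra h
      push_neg at h
      have := hmax (m + 1) h
      omega
    have hmem : s' ∈ Set.Icc (t m) (t (m + 1)) := ⟨hm, hlt.le⟩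
    have hr := (hratio m s' hmem).1
    have hQm : Q (t m) ≤ Real.exp c * Q s' := by
      have h1 : Real.exp (-c) * Q (t m) ≤ Q s' := by
        rw [le_div_iff₀ (hQ (t m))] at hr
        linarith
      have hexp : Real.exp c * Real.exp (-c) = 1 := by
        rw [← Real.exp_add]; simp
      calc Q (t m) = Real.exp c * (Real.exp (-c) * Q (t m)) := by
              rw [← mul_assoc, hexp, one_mul]
        _ ≤ Real.exp c * Q s' := mul_le_mul_of_nonneg_left h1 (Real.exp_pos c).le
    calc sInf A ≤ Real.exp (ε * (t m - t n)) * Q (t m) := csInf_le hAb ⟨m, hnm, rfl⟩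
      _ ≤ Real.exp (ε * (s' - t n)) * (Real.exp c * Q s') := by
          apply mul_le_mul _ hQm (hQ (t m)).le (Real.exp_pos _).le
          exact Real.exp_le_exp.mpr (by nlinarith)
      _ = Real.exp c * (Real.exp (ε * (s' - t n)) * Q s') := by ring
  constructor
  · rw [hp, hq]
    exact mul_le_mul_of_nonneg_left (csInf_le_csInf hBb hAne hAB) hε.le
  · rw [hp, hq]
    have h2 : sInf A ≤ Real.exp c * sInf B := by
      rw [← div_le_iff₀' (Real.exp_pos c)]
      refine le_csInf hBne fun y hy => ?_
      rw [div_le_iff₀' (Real.exp_pos c)]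
      exact key y hy
    calc ε * sInf A ≤ ε * (Real.exp c * sInf B) :=
          mul_le_mul_of_nonneg_left h2 hε.le
      _ = Real.exp c * (ε * sInf B) := by ring
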